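/- Let G be a finite 3-group acting by group automorphisms on the lattice Λ = ℤ² (i.e. via a homomorphism G → GL₂(ℤ)). Then the sublattice Λ^G of G-invariant elements does not have rank 1: either Λ^G = 0 or Λ^G = Λ, i.e. either the only invariant element is 0 or the action of G on Λ is trivial. -/

import Mathlib

open Matrix

private lemma key_lemma (M : Matrix (Fin 2) (Fin 2) ℤ) (k : ℕ)
    (hM : M ^ (3 ^ k) = 1) (v : Fin 2 → ℤ) (hv : v ≠ 0)
    (hfix : M.mulVec v = v) : M = 1 := by
  set n : ℕ := 3 ^ k with hn
  have hnpos : 0 < n := Nat.pow_pos (by norm_num)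
  -- det M = 1
  have hdetpow : M.det ^ n = 1 := by
    rw [← Matrix.det_pow, hM, Matrix.det_one]
  have hodd : Odd n := Odd.pow (by decide)
  have hdet : M.det = 1 := by
    have hu : IsUnit M.det := by
      refine IsUnit.of_mul_eq_one (M.det ^ (n - 1)) ?_
      rw [← pow_succ', Nat.sub_add_cancel hnpos, hdetpow]
    rcases Int.isUnit_iff.mp hu with h | h
    · exact h
    · rw [h, hodd.neg_one_pow] at hdetpow; norm_num at hdetpow
  -- (M - 1).mulVec v = 0
  have h1 : (M - 1).mulVec v = 0 := by
    simp [Matrix.sub_mulVec, hfix]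
  -- det (M - 1) = 0
  have h2 : (M - 1).det • v = 0 := by
    have := congrArg (Matrix.mulVec (Matrix.adjugate (M - 1))) h1
    rwa [Matrix.mulVec_mulVec, Matrix.adjugate_mul, Matrix.smul_mulVec,
      Matrix.one_mulVec, Matrix.mulVec_zero] at this
  obtain ⟨i, hi⟩ : ∃ i, v i ≠ 0 := by
    by_contra h
    push_neg at h
    exact hv (funext h)
  have hdet0 : (M - 1).det = 0 := by
    have := congrFun h2 i
    simp only [Pi.smul_apply, smul_eq_mul, Pi.zero_apply] at this
    exact (mul_eq_zero.mp this).resolve_right hi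
  -- entries
  have hd2 : M.det = M 0 0 * M 1 1 - M 0 1 * M 1 0 := Matrix.det_fin_two M
  have hd3 : (M - 1).det = (M 0 0 - 1) * (M 1 1 - 1) - M 0 1 * M 1 0 := by
    rw [Matrix.det_fin_two]; simp [Matrix.sub_apply, Matrix.one_apply]
  have htr : M 0 0 + M 1 1 = 2 := by
    rw [hd3] at hdet0; rw [hd2] at hdet; nlinarith [hdet0, hdet]
  -- N ^ 2 = 0
  have hbc : M 0 1 * M 1 0 = -(M 0 0 - 1) ^ 2 := by
    have h := hdet; rw [hd2] at h
    linear_combination -h + M 0 0 * htr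
  set N := M - 1 with hN
  have hN2 : N * N = 0 := by
    ext i j
    fin_cases i <;> fin_cases j <;>
      simp only [hN, Matrix.mul_apply, Fin.sum_univ_two, Matrix.sub_apply, Matrix.one_apply,
        Matrix.zero_apply, Fin.zero_eta, Fin.mk_one, if_true, if_false, Fin.isValue,
        one_ne_zero, zero_ne_one, reduceIte, sub_zero]
    · linear_combination hbc
    · linear_combination M 0 1 * htr
    · linear_combination M 1 0 * htr
    · linear_combination hbc + (M 1 1 - M 0 0) * htr
  -- M ^ m = 1 + m • N
  have hpow : ∀ m : ℕ, M ^ m = 1 + m • N := by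
    intro m
    induction m with
    | zero => simp
    | succ m ih =>
      have hM1 : M = 1 + N := by rw [hN]; abel
      rw [pow_succ, ih, hM1, mul_add, mul_one, add_mul, one_mul, smul_mul_assoc, hN2,
        smul_zero, add_zero, succ_nsmul]
      abel
  have hfinal : (n : ℕ) • N = 0 := by
    have := hpow n
    rw [hM] at this
    linear_combination (norm := abel) -this
  have hN0 : N = 0 := by
    ext i j
    have := congrFun (congrFun hfinal i) j
    simp only [Matrix.smul_apply, nsmul_eq_mul, Matrix.zero_apply] at this
    have hne : (n : ℤ) ≠ 0 := by positivity
    exact (mul_eq_zero.mp this).resolve_left hne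
  rw [hN, sub_eq_zero] at hN0
  exact hN0

theorem stmt_14 (G : Type*) [Group G] [Finite G] (hG : IsPGroup 3 G)
    (ρ : G →* GL (Fin 2) ℤ) :
    (∀ v : Fin 2 → ℤ,
        (∀ g : G, ((ρ g : GL (Fin 2) ℤ) : Matrix (Fin 2) (Fin 2) ℤ).mulVec v = v) → v = 0) ∨
    (∀ (g : G) (v : Fin 2 → ℤ),
        ((ρ g : GL (Fin 2) ℤ) : Matrix (Fin 2) (Fin 2) ℤ).mulVec v = v) := by
  by_cases htriv : ∀ (g : G) (v : Fin 2 → ℤ),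
      ((ρ g : GL (Fin 2) ℤ) : Matrix (Fin 2) (Fin 2) ℤ).mulVec v = v
  · exact Or.inr htriv
  · left
    push_neg at htriv
    obtain ⟨g, w, hw⟩ := htriv
    intro v hv
    by_contra hv0
    obtain ⟨k, hk⟩ := hG g
    have hMpow : ((ρ g : GL (Fin 2) ℤ) : Matrix (Fin 2) (Fin 2) ℤ) ^ (3 ^ k) = 1 := by
      have : (ρ g) ^ (3 ^ k) = 1 := by rw [← map_pow, hk, _root_.map_one]
      calc ((ρ g : GL (Fin 2) ℤ) : Matrix (Fin 2) (Fin 2) ℤ) ^ (3 ^ k)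
          = (((ρ g) ^ (3 ^ k) : GL (Fin 2) ℤ) : Matrix (Fin 2) (Fin 2) ℤ) := by
            rw [Units.val_pow_eq_pow_val]
        _ = 1 := by rw [this]; rfl
    have := key_lemma _ k hMpow v hv0 (hv g)
    rw [this] at hw
    exact hw (Matrix.one_mulVec w)
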